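/- arXiv:2402.15402 — 3 statements merged into one kernel-verified Lean document; each statement's English description precedes it below -/
import Mathlib

section
/- In the abstract rearrangement model with buffers, if B is a feedback vertex set of the dependency digraph G_dep on M vertices, then all objects can be placed at their goals using at most M + |B| pick-and-place steps: each object in B is first moved to a buffer (one step each) and later to its goal (one step each), and each remaining object is moved directly to its goal (one step each). -/
/-- `B` is a feedback vertex set: the induced subgraph on the complement of `B` is acyclic. -/
def IsFVS {V : Type} (E : V → V → Prop) (B : Finset V) : Prop :=
  ∀ v, ¬ Relation.TransGen (fun a b => E a b ∧ a ∉ B ∧ b ∉ B) v v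

/-- A schedule is a list of steps `(v, move)` where `move = true` means moving `v` to its
goal and `move = false` means moving `v` to a buffer.  A schedule is valid if whenever an
object is moved to its goal, every object occupying its goal (its out-neighbors in the
dependency digraph) has been displaced at an earlier step. -/
def ValidSchedule {V : Type} (E : V → V → Prop) (L : List (V × Bool)) : Prop :=
  ∀ i : Fin L.length, (L.get i).2 = true →
    ∀ w, E (L.get i).1 w → ∃ j : Fin L.length, (j : ℕ) < (i : ℕ) ∧ (L.get j).1 = w

/-- A schedule is complete if every object is eventually moved to its goal. -/
def CompleteSchedule {V : Type} (L : List (V × Bool)) : Prop :=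
  ∀ v : V, (v, true) ∈ L



lemma topo_list {V : Type} [DecidableEq V] {R : V → V → Prop}
    (wf : WellFounded (flip R)) (S : Finset V) :
    ∃ l : List V, (∀ v, v ∈ l ↔ v ∈ S) ∧ l.length = S.card ∧
      ∀ i : Fin l.length, ∀ w, R (l.get i) w → w ∈ l.take i ∨ w ∉ S := by
  induction S using Finset.strongInduction with
  | _ S ih =>
    rcases S.eq_empty_or_nonempty with rfl | hne
    · exact ⟨[], by simp, by simp, fun i => absurd i.2 (by simp)⟩
    · obtain ⟨m, hmS, hmin⟩ := wf.has_min S hne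
      replace hmS : m ∈ S := hmS
      obtain ⟨l', hmem, hlen, hstep⟩ := ih (S.erase m) (Finset.erase_ssubset hmS)
      refine ⟨m :: l', ?_, ?_, ?_⟩
      · intro v
        by_cases hv : v = m
        · simp [hv, hmS]
        · simp [hmem, Finset.mem_erase, hv]
      · simp [hlen, Finset.card_erase_add_one hmS]
      · rintro ⟨i, hi⟩ w hR
        match i with
        | 0 =>
          right
          intro hwS
          exact hmin w hwS hR
        | Nat.succ i =>
          have hi' : i < l'.length := by simpa using hi
          rcases hstep ⟨i, hi'⟩ w (by simpa using hR) with h | h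
          · left
            simp only [List.take_succ_cons]
            exact List.mem_cons_of_mem _ h
          · by_cases hw : w = m
            · left
              simp [hw, List.take_succ_cons]
            · right
              intro hwS
              exact h (Finset.mem_erase.mpr ⟨hw, hwS⟩)


/-- Upper bound: if `B` is a feedback vertex set of the dependency digraph on `M` objects,
then all objects can be placed at their goals using at most `M + |B|` pick-and-place steps. -/
theorem rearrangement_upper_bound {V : Type} [Fintype V] (E : V → V → Prop) (B : Finset V)
    (hB : IsFVS E B) :
    ∃ L : List (V × Bool), ValidSchedule E L ∧ CompleteSchedule L ∧
      L.length ≤ Fintype.card V + B.card := by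

  classical
  set R : V → V → Prop := fun a b => E a b ∧ b ∉ B with hRdef
  have key : ∀ a b, Relation.TransGen R a b →
      b ∉ B ∧ (a ∉ B → Relation.TransGen (fun a b => E a b ∧ a ∉ B ∧ b ∉ B) a b) := by
    intro a b h
    induction h with
    | single h => exact ⟨h.2, fun ha => .single ⟨h.1, ha, h.2⟩⟩
    | tail h₁ h₂ ih => exact ⟨h₂.2, fun ha => (ih.2 ha).tail ⟨h₂.1, ih.1, h₂.2⟩⟩
  have hirr : IsIrrefl V (Relation.TransGen (flip R)) := by
    constructor
    intro v hv
    have hv' : Relation.TransGen R v v := by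
      rw [← Relation.transGen_swap]; exact hv
    obtain ⟨hvB, h2⟩ := key v v hv'
    exact hB v (h2 hvB)
  have wfT : WellFounded (Relation.TransGen (flip R)) :=
    @Finite.wellFounded_of_trans_of_irrefl V _ _ _ hirr
  have wf : WellFounded (flip R) :=
    Subrelation.wf (fun h => Relation.TransGen.single h) wfT
  obtain ⟨l, hmem, hlen, hstep⟩ := topo_list wf (Finset.univ : Finset V)
  set Lb : List (V × Bool) := B.toList.map (fun b => (b, false)) with hLb
  set Lg : List (V × Bool) := l.map (fun v => (v, true)) with hLg
  have hLbLen : Lb.length = B.card := by simp [hLb]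
  have hLgLen : Lg.length = l.length := by simp [hLg]
  refine ⟨Lb ++ Lg, ?_, ?_, ?_⟩
  · -- Valid
    rintro ⟨i, hi0⟩ htrue w hEw
    have e1 : (Lb ++ Lg).length = Lb.length + Lg.length := List.length_append
    have e2 : Lg.length = l.length := hLgLen
    have e3 : Lb.length = B.toList.length := by simp [hLb]
    have hi : i < Lb.length + l.length := by omega
    by_cases hcase : i < Lb.length
    · exfalso
      have : ((Lb ++ Lg).get ⟨i, hi0⟩).2 = false := by
        rw [List.get_eq_getElem, List.getElem_append_left hcase]
        simp [hLb]
      rw [this] at htrue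
      simp at htrue
    · push_neg at hcase
      have hIl : i - Lb.length < l.length := by omega
      have hv : ((Lb ++ Lg).get ⟨i, hi0⟩).1 = l[i - Lb.length]'hIl := by
        rw [List.get_eq_getElem, List.getElem_append_right hcase]
        simp [hLg]
      rw [hv] at hEw
      by_cases hwB : w ∈ B
      · have hwl : w ∈ B.toList := Finset.mem_toList.mpr hwB
        obtain ⟨k, hk, hkw⟩ := List.mem_iff_getElem.mp hwl
        have hk' : k < Lb.length := by omega
        refine ⟨⟨k, by omega⟩, ?_, ?_⟩
        · show k < i; omega
        · rw [List.get_eq_getElem, List.getElem_append_left hk']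
          simp [hLb, hkw]
      · have hRvw : R (l[i - Lb.length]'hIl) w := ⟨hEw, hwB⟩
        have hw := hstep ⟨i - Lb.length, hIl⟩ w (by rw [List.get_eq_getElem]; exact hRvw)
        rcases hw with hwtake | hwuniv
        · have hwtake' : w ∈ List.take (i - Lb.length) l := hwtake
          obtain ⟨k, hk, hkw⟩ := List.mem_iff_getElem.mp hwtake'
          have ht : (List.take (i - Lb.length) l).length = min (i - Lb.length) l.length :=
            List.length_take
          have hk2 : k < i - Lb.length := by omega
          have hkl : k < l.length := by omega
          have hlkw : l[k] = w := by rw [← hkw, List.getElem_take]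
          refine ⟨⟨Lb.length + k, by omega⟩, ?_, ?_⟩
          · show Lb.length + k < i; omega
          · rw [List.get_eq_getElem,
              List.getElem_append_right (show Lb.length ≤ Lb.length + k by omega)]
            have h5 : Lb.length + k - Lb.length = k := by omega
            simp only [hLg]
            rw [List.getElem_map]
            simp only [h5]
            exact hlkw
        · exact absurd (Finset.mem_univ w) hwuniv
  · -- Complete
    intro v
    refine List.mem_append_right _ ?_
    simp only [hLg, List.mem_map]
    exact ⟨v, (hmem v).mpr (Finset.mem_univ v), rfl⟩
  · -- Length
    simp only [List.length_append, hLbLen, hLgLen, hlen, Finset.card_univ]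
    omega
end

section
/- In the abstract rearrangement model, any valid schedule that moves all M objects to their goals must use at least M + |B*| pick-and-place steps, where |B*| is the size of a minimum feedback vertex set of the dependency digraph: each object needs at least one move, and for every directed cycle of the dependency graph at least one of its objects must be moved to a non-goal (buffer) location first, costing an extra move; a set of objects receiving extra moves whose removal breaks all cycles is a feedback vertex set. -/
/-- Lower bound: any valid schedule moving all `M` objects to their goals uses at least
`M + |B*|` pick-and-place steps, where `B*` is a minimum feedback vertex set. -/
theorem rearrangement_lower_bound {V : Type} [Fintype V] (E : V → V → Prop) (B : Finset V)
    (hB : IsFVS E B) (hmin : ∀ B' : Finset V, IsFVS E B' → B.card ≤ B'.card)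
    (L : List (V × Bool)) (hL : ValidSchedule E L) (hC : CompleteSchedule L) :
    Fintype.card V + B.card ≤ L.length := by
  classical
  set B' : Finset V := Finset.univ.filter (fun v => (v, false) ∈ L) with hB'def
  have hmemB' : ∀ v : V, v ∈ B' ↔ (v, false) ∈ L := by
    intro v; simp [hB'def]
  -- existence of an occurrence of each vertex
  have hex : ∀ v : V, ∃ i : ℕ, ∃ hi : i < L.length, (L.get ⟨i, hi⟩).1 = v := by
    intro v
    obtain ⟨i, hi⟩ := List.mem_iff_get.mp (hC v)
    exact ⟨i, i.isLt, by rw [hi]⟩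
  -- first occurrence index
  let f : V → ℕ := fun v => Nat.find (hex v)
  have hf_spec : ∀ v, ∃ hi : f v < L.length, (L.get ⟨f v, hi⟩).1 = v :=
    fun v => Nat.find_spec (hex v)
  have hf_min : ∀ v (j : Fin L.length), (L.get j).1 = v → f v ≤ (j : ℕ) := by
    intro v j hj
    exact Nat.find_le ⟨j.isLt, hj⟩
  -- key decrease lemma
  have hdec : ∀ a b : V, (E a b ∧ a ∉ B' ∧ b ∉ B') → f b < f a := by
    intro a b ⟨hE, ha, hb⟩
    obtain ⟨hi, hfst⟩ := hf_spec a
    have hsnd : (L.get ⟨f a, hi⟩).2 = true := by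
      by_contra h
      have h2 : (L.get ⟨f a, hi⟩).2 = false := by
        cases h' : (L.get ⟨f a, hi⟩).2 <;> simp_all
      have : (a, false) ∈ L := by
        have : L.get ⟨f a, hi⟩ = (a, false) := Prod.ext hfst h2
        rw [← this]; exact List.get_mem L ⟨f a, hi⟩
      exact ha ((hmemB' a).mpr this)
    obtain ⟨j, hj, hjb⟩ := hL ⟨f a, hi⟩ hsnd b (by rw [hfst]; exact hE)
    exact lt_of_le_of_lt (hf_min b j hjb) hj
  -- B' is an FVS
  have hFVS : IsFVS E B' := by
    intro v hv
    have : ∀ x y : V, Relation.TransGen (fun a b => E a b ∧ a ∉ B' ∧ b ∉ B') x y →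
        f y < f x := by
      intro x y hxy
      induction hxy with
      | single h => exact hdec _ _ h
      | tail _ h ih => exact lt_trans (hdec _ _ h) ih
    exact absurd (this v v hv) (lt_irrefl _)
  have h1 : B.card ≤ B'.card := hmin B' hFVS
  -- counting: injection from V ⊕ B' into Fin L.length
  have hT : ∀ v : V, ∃ i : Fin L.length, L.get i = (v, true) :=
    fun v => List.mem_iff_get.mp (hC v)
  have hF : ∀ v : {x // x ∈ B'}, ∃ i : Fin L.length, L.get i = (v.1, false) :=
    fun v => List.mem_iff_get.mp ((hmemB' v.1).mp v.2)
  let g : V ⊕ {x // x ∈ B'} → Fin L.length := fun x =>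
    match x with
    | Sum.inl v => (hT v).choose
    | Sum.inr v => (hF v).choose
  have hg : Function.Injective g := by
    intro x y hxy
    cases x with
    | inl v =>
      cases y with
      | inl w =>
        have h1 := (hT v).choose_spec
        have h2 := (hT w).choose_spec
        have hxy' : (hT v).choose = (hT w).choose := hxy
        have : (v, true) = (w, true) := by rw [← h1, ← h2, hxy']
        simp_all
      | inr w =>
        have h1 := (hT v).choose_spec
        have h2 := (hF w).choose_spec
        have hxy' : (hT v).choose = (hF w).choose := hxy
        have : (v, true) = (w.1, false) := by rw [← h1, ← h2, hxy']
        simp_all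
    | inr v =>
      cases y with
      | inl w =>
        have h1 := (hF v).choose_spec
        have h2 := (hT w).choose_spec
        have hxy' : (hF v).choose = (hT w).choose := hxy
        have : (v.1, false) = (w, true) := by rw [← h1, ← h2, hxy']
        simp_all
      | inr w =>
        have h1 := (hF v).choose_spec
        have h2 := (hF w).choose_spec
        have hxy' : (hF v).choose = (hF w).choose := hxy
        have : (v.1, false) = (w.1, false) := by rw [← h1, ← h2, hxy']
        have : v.1 = w.1 := by simp_all
        exact congrArg Sum.inr (Subtype.ext this)
  have h2 : Fintype.card V + B'.card ≤ L.length := by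
    have := Fintype.card_le_of_injective g hg
    simpa [Fintype.card_sum, Fintype.card_coe] using this
  omega
end

section
/- Combining upper and lower bounds: the minimum number of pick-and-place steps to solve the abstract rearrangement problem with dependency digraph G_dep on M objects equals M + |B*|, where |B*| is the minimum feedback vertex set size of G_dep. -/
private lemma wf_swap' {V : Type} [Finite V] (R : V → V → Prop)
    (h : ∀ v, ¬ Relation.TransGen R v v) : WellFounded (fun w v : V => R v w) := by
  have hi : IsIrrefl V (Relation.TransGen (Function.swap R)) :=
    ⟨fun a ha => h a (Relation.transGen_swap.mp ha)⟩
  have ht : IsTrans V (Relation.TransGen (Function.swap R)) :=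
    ⟨fun _ _ _ => Relation.TransGen.trans⟩
  have hwf := Finite.wellFounded_of_trans_of_irrefl (Relation.TransGen (Function.swap R))
  exact @Subrelation.wf V (Relation.TransGen (Function.swap R)) (fun w v => R v w)
    (fun hr => Relation.TransGen.single hr) hwf

/-- topological sort of a finite set w.r.t. an acyclic relation -/
private lemma topo_aux {V : Type} [Fintype V] (R : V → V → Prop)
    (hirr : ∀ v, ¬ Relation.TransGen R v v) (S : Finset V) :
    ∃ l : List V, l.length = S.card ∧ (∀ v, v ∈ l ↔ v ∈ S) ∧
      ∀ (k : ℕ) (hk : k < l.length) (w : V), R (l[k]'hk) w → w ∈ S →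
        ∃ j, j < k ∧ ∃ hj : j < l.length, l[j]'hj = w := by
  classical
  induction S using Finset.strongInduction with
  | _ S ih =>
    rcases S.eq_empty_or_nonempty with rfl | hne
    · exact ⟨[], by simp, by simp, by simp⟩
    · have hwf := wf_swap' R hirr
      obtain ⟨m, hmS, hmin⟩ := hwf.has_min (↑S) (by exact_mod_cast hne)
      obtain ⟨l', hlen, hmem, hcond⟩ := ih (S.erase m) (Finset.erase_ssubset hmS)
      refine ⟨m :: l', ?_, ?_, ?_⟩
      · simp only [List.length_cons, hlen, Finset.card_erase_of_mem hmS]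
        have : 1 ≤ S.card := Finset.card_pos.mpr hne
        omega
      · intro v
        simp only [List.mem_cons, hmem, Finset.mem_erase]
        constructor
        · rintro (rfl | ⟨_, hv⟩) <;> first | exact hmS | assumption
        · intro hv
          by_cases hvm : v = m
          · exact Or.inl hvm
          · exact Or.inr ⟨hvm, hv⟩
      · intro k hk w hR hwS
        cases k with
        | zero =>
          simp only [List.getElem_cons_zero] at hR
          exact absurd hR (hmin w hwS)
        | succ k' =>
          have hk' : k' < l'.length := by simpa using hk
          have hget : (m :: l')[k' + 1]'hk = l'[k']'hk' := by simp
          rw [hget] at hR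
          by_cases hwm : w = m
          · exact ⟨0, Nat.succ_pos _, by simp [hwm]⟩
          · obtain ⟨j, hjk, hjl, hje⟩ :=
              hcond k' hk' w hR (Finset.mem_erase.mpr ⟨hwm, hwS⟩)
            exact ⟨j + 1, by omega, by simpa using hjl, by simpa using hje⟩

/-- The minimum number of pick-and-place steps to solve the rearrangement problem with
dependency digraph `E` on `M` objects equals `M + |B*|`, where `B*` is a minimum feedback
vertex set: there is a valid complete schedule of exactly that length, and no valid
complete schedule is shorter. -/
theorem rearrangement_optimal_steps {V : Type} [Fintype V] (E : V → V → Prop) (B : Finset V)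
    (hB : IsFVS E B) (hmin : ∀ B' : Finset V, IsFVS E B' → B.card ≤ B'.card) :
    (∃ L : List (V × Bool), ValidSchedule E L ∧ CompleteSchedule L ∧
        L.length = Fintype.card V + B.card) ∧
      ∀ L : List (V × Bool), ValidSchedule E L → CompleteSchedule L →
        Fintype.card V + B.card ≤ L.length := by
  classical
  constructor
  · -- upper bound: explicit schedule
    obtain ⟨l, hlen, hmem, htopo⟩ :=
      topo_aux (fun a b => E a b ∧ a ∉ B ∧ b ∉ B) hB (Finset.univ \ B)
    have hmem' : ∀ v, v ∈ l ↔ v ∉ B := by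
      intro v; rw [hmem]; simp
    set P1 : List (V × Bool) := B.toList.map (fun b => (b, false)) with hP1def
    set P2 : List (V × Bool) := l.map (fun v => (v, true)) with hP2def
    set P3 : List (V × Bool) := B.toList.map (fun b => (b, true)) with hP3def
    have hL1 : P1.length = B.card := by simp [hP1def]
    have hL2 : P2.length = (Finset.univ \ B).card := by simp [hP2def, hlen]
    have hL3 : P3.length = B.card := by simp [hP3def]
    have hcardS : (Finset.univ \ B).card = Fintype.card V - B.card := by
      rw [Finset.card_sdiff_of_subset (Finset.subset_univ B), Finset.card_univ]
    have hBle : B.card ≤ Fintype.card V := Finset.card_le_univ B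
    refine ⟨P1 ++ (P2 ++ P3), ?_, ?_, ?_⟩
    · -- validity
      intro i htrue w hEw
      simp only [List.get_eq_getElem] at htrue hEw ⊢
      set n := (i : ℕ) with hn
      have hni : n < (P1 ++ (P2 ++ P3)).length := i.isLt
      -- helper to produce the witness index
      have mkj : ∀ (j : ℕ), j < n → ∀ hj : j < (P1 ++ (P2 ++ P3)).length,
          ((P1 ++ (P2 ++ P3))[j]'hj).1 = w →
          ∃ jj : Fin (P1 ++ (P2 ++ P3)).length, (jj : ℕ) < (i : ℕ) ∧
            ((P1 ++ (P2 ++ P3))[(jj : ℕ)]'jj.isLt).1 = w := by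
        intro j hjn hj hje
        exact ⟨⟨j, hj⟩, hjn, hje⟩
      -- index of an element of B inside P1
      have inP1 : ∀ u ∈ B, ∃ k, ∃ hk : k < P1.length,
          (P1[k]'hk) = (u, false) := by
        intro u hu
        obtain ⟨k, hk, hke⟩ := List.mem_iff_getElem.mp (Finset.mem_toList.mpr hu)
        exact ⟨k, by simpa [hP1def] using hk, by simp [hP1def, hke]⟩
      -- index of an element of l inside P2
      have inP2 : ∀ (k : ℕ) (hk : k < l.length),
          ∃ hk2 : k < P2.length, (P2[k]'hk2) = (l[k]'hk, true) := by
        intro k hk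
        exact ⟨by simpa [hP2def] using hk, by simp [hP2def]⟩
      by_cases hc1 : n < P1.length
      · -- region 1 : buffer moves, snd = false
        exfalso
        have : (P1 ++ (P2 ++ P3))[n]'hni = P1[n]'hc1 := List.getElem_append_left hc1
        rw [this] at htrue
        have : (P1[n]'hc1).2 = false := by simp [hP1def]
        rw [this] at htrue; exact Bool.false_ne_true htrue
      · push_neg at hc1
        have hrest : (P1 ++ (P2 ++ P3))[n]'hni = (P2 ++ P3)[n - P1.length]'(by
            have := hni; simp only [List.length_append] at this ⊢; omega) :=
          List.getElem_append_right hc1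
        by_cases hc2 : n - P1.length < P2.length
        · -- region 2 : goal moves of non-B objects
          set k := n - P1.length with hk
          have hkl : k < l.length := by simpa [hP2def] using hc2
          have hmid : (P2 ++ P3)[k]'(by simp only [List.length_append]; omega)
              = P2[k]'hc2 := List.getElem_append_left hc2
          have hval : (P1 ++ (P2 ++ P3))[n]'hni = (l[k]'hkl, true) := by
            rw [hrest, hmid]; simp [hP2def]
          rw [hval] at hEw
          simp only at hEw
          by_cases hwB : w ∈ B
          · obtain ⟨k', hk', hke⟩ := inP1 w hwB
            refine mkj k' (by omega) (by simp only [List.length_append]; omega) ?_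
            have : (P1 ++ (P2 ++ P3))[k']'(by simp only [List.length_append]; omega)
                = P1[k']'hk' := List.getElem_append_left hk'
            rw [this, hke]
          · have hlkB : (l[k]'hkl) ∉ B := (hmem' _).mp (List.getElem_mem hkl)
            obtain ⟨j', hj'k, hj'l, hj'e⟩ := htopo k hkl w ⟨hEw, hlkB, hwB⟩ (by simp [hwB])
            obtain ⟨hj'2, hj'P2⟩ := inP2 j' hj'l
            refine mkj (P1.length + j') (by omega)
              (by simp only [List.length_append]; omega) ?_
            have h1 : (P1 ++ (P2 ++ P3))[P1.length + j']'(by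
                simp only [List.length_append]; omega)
                = (P2 ++ P3)[P1.length + j' - P1.length]'(by
                  simp only [List.length_append]; omega) :=
              List.getElem_append_right (by omega)
            have h2 : P1.length + j' - P1.length = j' := by omega
            rw [h1]
            simp only [h2]
            have h3 : (P2 ++ P3)[j']'(by simp only [List.length_append]; omega)
                = P2[j']'hj'2 := List.getElem_append_left hj'2
            rw [h3, hj'P2, hj'e]
        · -- region 3 : goal moves of B objects; all objects already moved
          push_neg at hc2
          by_cases hwB : w ∈ B
          · obtain ⟨k', hk', hke⟩ := inP1 w hwB
            refine mkj k' (by omega) (by simp only [List.length_append]; omega) ?_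
            have : (P1 ++ (P2 ++ P3))[k']'(by simp only [List.length_append]; omega)
                = P1[k']'hk' := List.getElem_append_left hk'
            rw [this, hke]
          · have hwl : w ∈ l := (hmem' w).mpr hwB
            obtain ⟨k', hk', hke⟩ := List.mem_iff_getElem.mp hwl
            obtain ⟨hk'2, hkP2⟩ := inP2 k' hk'
            refine mkj (P1.length + k') (by omega)
              (by simp only [List.length_append]; omega) ?_
            have h1 : (P1 ++ (P2 ++ P3))[P1.length + k']'(by
                simp only [List.length_append]; omega)
                = (P2 ++ P3)[P1.length + k' - P1.length]'(by
                  simp only [List.length_append]; omega) :=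
              List.getElem_append_right (by omega)
            have h2 : P1.length + k' - P1.length = k' := by omega
            rw [h1]
            simp only [h2]
            have h3 : (P2 ++ P3)[k']'(by simp only [List.length_append]; omega)
                = P2[k']'hk'2 := List.getElem_append_left hk'2
            rw [h3, hkP2, hke]
    · -- completeness
      intro v
      by_cases hv : v ∈ B
      · exact List.mem_append_right _ (List.mem_append_right _
          (List.mem_map_of_mem (Finset.mem_toList.mpr hv)))
      · have hvl : v ∈ l := (hmem' v).mpr hv
        exact List.mem_append_right _ (List.mem_append_left _
          (List.mem_map_of_mem hvl))
    · -- length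
      simp only [List.length_append, hL1, hL2, hL3, hcardS]
      omega
  · -- lower bound
    intro L hV hC
    have hex : ∀ v : V, ∃ n, ∃ h : n < L.length, L[n]'h = (v, true) := by
      intro v
      exact List.mem_iff_getElem.mp (hC v)
    -- first index at which v is placed at its goal
    let idx : V → ℕ := fun v => Nat.find (hex v)
    have hidx_lt : ∀ v, idx v < L.length := fun v => (Nat.find_spec (hex v)).1
    have hidx_get : ∀ v, L[idx v]'(hidx_lt v) = (v, true) := by
      intro v
      obtain ⟨h, he⟩ := Nat.find_spec (hex v)
      exact he
    have hidx_min : ∀ v m, m < idx v → ∀ h : m < L.length, L[m]'h ≠ (v, true) := by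
      intro v m hm h he
      exact Nat.find_min (hex v) hm ⟨h, he⟩
    -- B' : objects touched before their goal placement
    set B' : Finset V := Finset.univ.filter
      (fun v => ∃ m, m < idx v ∧ ∃ h : m < L.length, (L[m]'h).1 = v) with hB'def
    have hmemB' : ∀ v, v ∈ B' ↔ ∃ m, m < idx v ∧ ∃ h : m < L.length, (L[m]'h).1 = v := by
      intro v; simp [hB'def]
    -- along restricted edges, idx strictly decreases
    have hdec : ∀ a b, (E a b ∧ a ∉ B' ∧ b ∉ B') → idx b < idx a := by
      rintro a b ⟨hab, haB, hbB⟩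
      have h2 : (L.get ⟨idx a, hidx_lt a⟩).2 = true := by
        simp only [List.get_eq_getElem, hidx_get]
      have h1 : E (L.get ⟨idx a, hidx_lt a⟩).1 b := by
        simp only [List.get_eq_getElem, hidx_get]; exact hab
      obtain ⟨j, hj, hje⟩ := hV ⟨idx a, hidx_lt a⟩ h2 b h1
      simp only [List.get_eq_getElem] at hje hj
      by_contra hle
      push_neg at hle
      have hjb : (j : ℕ) < idx b ∨ idx b ≤ (j : ℕ) := lt_or_ge _ _
      rcases hjb with hjb | hjb
      · exact hbB ((hmemB' b).mpr ⟨j, hjb, j.isLt, hje⟩)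
      · omega
    have hfvs : IsFVS E B' := by
      intro v hTG
      have : ∀ a b : V, Relation.TransGen (fun a b => E a b ∧ a ∉ B' ∧ b ∉ B') a b →
          idx b < idx a := by
        intro a b h
        induction h with
        | single h => exact hdec _ _ h
        | tail _ h ih => exact lt_trans (hdec _ _ h) ih
      exact absurd (this v v hTG) (lt_irrefl _)
    have hcard : B.card ≤ B'.card := hmin B' hfvs
    -- choose for each v ∈ B' an early index
    have hch : ∀ v ∈ B', ∃ m, m < idx v ∧ ∃ h : m < L.length, (L[m]'h).1 = v := by
      intro v hv; exact (hmemB' v).mp hv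
    let jdx : V → ℕ := fun v =>
      if h : ∃ m, m < idx v ∧ ∃ hh : m < L.length, (L[m]'hh).1 = v then Nat.find h else 0
    have hjdx : ∀ v ∈ B', jdx v < idx v ∧ ∃ h : jdx v < L.length, (L[jdx v]'h).1 = v := by
      intro v hv
      have h := hch v hv
      simp only [jdx, dif_pos h]
      exact Nat.find_spec h
    -- counting
    set S1 : Finset ℕ := Finset.univ.image idx with hS1def
    set S2 : Finset ℕ := B'.image jdx with hS2def
    have hS1card : S1.card = Fintype.card V := by
      rw [hS1def, Finset.card_image_of_injOn, Finset.card_univ]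
      intro a _ b _ hab
      have hg : L[idx a]'(hidx_lt a) = L[idx b]'(hidx_lt b) :=
        congrArg L.get (Fin.ext hab : (⟨idx a, hidx_lt a⟩ : Fin L.length) = ⟨idx b, hidx_lt b⟩)
      rw [hidx_get a, hidx_get b] at hg
      exact congrArg Prod.fst hg
    have hS2card : S2.card = B'.card := by
      rw [hS2def, Finset.card_image_of_injOn]
      intro a ha b hb hab
      obtain ⟨hal, haj, hae⟩ := hjdx a ha
      obtain ⟨hbl, hbj, hbe⟩ := hjdx b hb
      have hg : L[jdx a]'haj = L[jdx b]'hbj :=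
        congrArg L.get (Fin.ext hab : (⟨jdx a, haj⟩ : Fin L.length) = ⟨jdx b, hbj⟩)
      rw [hg, hbe] at hae
      exact hae.symm
    have hdisj : Disjoint S1 S2 := by
      rw [Finset.disjoint_left]
      intro n hn1 hn2
      obtain ⟨u, _, hu⟩ := Finset.mem_image.mp hn1
      obtain ⟨v, hv, hvj⟩ := Finset.mem_image.mp hn2
      obtain ⟨hvl, hvh, hve⟩ := hjdx v hv
      have he : idx u = jdx v := by omega
      have hg : L[idx u]'(hidx_lt u) = L[jdx v]'hvh :=
        congrArg L.get (Fin.ext he : (⟨idx u, hidx_lt u⟩ : Fin L.length) = ⟨jdx v, hvh⟩)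
      have huv := congrArg Prod.fst hg
      simp only [hidx_get u, hve] at huv
      rw [huv] at hu
      omega
    have hsub : S1 ∪ S2 ⊆ Finset.range L.length := by
      intro n hn
      rcases Finset.mem_union.mp hn with hn | hn
      · obtain ⟨u, _, hu⟩ := Finset.mem_image.mp hn
        rw [Finset.mem_range]; rw [← hu]; exact hidx_lt u
      · obtain ⟨v, hv, hvj⟩ := Finset.mem_image.mp hn
        obtain ⟨_, hvh, _⟩ := hjdx v hv
        rw [Finset.mem_range]; omega
    have := Finset.card_le_card hsub
    rw [Finset.card_union_of_disjoint hdisj, Finset.card_range, hS1card, hS2card] at this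
    omega
end
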